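/- arXiv:2108.01546 — 2 statements merged into one kernel-verified Lean document; each statement's English description precedes it below -/
import Mathlib

section
/- Let R be a commutative ring, n ≥ 1, and let A be a symmetric n × n matrix over R whose determinant f := det(A) is a nonzerodivisor in R. Let C := coker(A : Rⁿ → Rⁿ) be the cokernel of the R-linear map given by A. Then: (a) f annihilates C, so C is a module over R̄ := R/(f); (b) the assignment (x, y) ↦ (xᵀ · adj(A) · y mod (f)), where adj(A) is the adjugate matrix of A, descends to a well-defined symmetric R̄-bilinear form C × C → R̄; and (c) the induced R̄-linear map C → Hom_{R̄}(C, R̄) is bijective. (Affine version of Lemma 4.2: the cokernel of a generically non-degenerate self-dual morphism is a symmetric sheaf, with the perfect pairing induced by the adjugate morphism q'.) -/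
/-!
Affine version of Lemma 4.2 of the paper: the cokernel of a generically non-degenerate
self-dual morphism is a symmetric sheaf, with the perfect pairing induced by the adjugate.
-/

open Matrix

/-- Let `R` be a commutative ring, `n ≥ 1`, and `A` a symmetric `n × n` matrix
over `R` whose determinant `f := det A` is a nonzerodivisor. Let `C := coker(A : Rⁿ → Rⁿ)`.
Then: (a) `f` annihilates `C`; (b) `(x, y) ↦ xᵀ ⬝ adj(A) ⬝ y mod (f)` descends to a
well-defined symmetric `R/(f)`-bilinear form on `C`; and (c) the induced map
`C → Hom(C, R/(f))` is bijective. -/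
theorem coker_of_symmetric_matrix_selfdual
    {R : Type*} [CommRing R] (n : ℕ) (hn : 1 ≤ n)
    (A : Matrix (Fin n) (Fin n) R) (hA : A.IsSymm)
    (hf : A.det ∈ nonZeroDivisors R) :
    -- (a) `det A` annihilates the cokernel `C`
    (∀ c : (Fin n → R) ⧸ LinearMap.range (Matrix.toLin' A), A.det • c = 0) ∧
    -- (b), (c): the adjugate pairing descends to a perfect symmetric bilinear form on `C`
    -- with values in `R/(det A)`
    ∃ β : ((Fin n → R) ⧸ LinearMap.range (Matrix.toLin' A)) →ₗ[R]
          ((Fin n → R) ⧸ LinearMap.range (Matrix.toLin' A)) →ₗ[R]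
          (R ⧸ Ideal.span {A.det}),
      (∀ x y : Fin n → R,
        β (Submodule.Quotient.mk x) (Submodule.Quotient.mk y)
          = Ideal.Quotient.mk (Ideal.span {A.det}) (x ⬝ᵥ (A.adjugate *ᵥ y))) ∧
      (∀ u v, β u v = β v u) ∧
      Function.Bijective
        (fun u : (Fin n → R) ⧸ LinearMap.range (Matrix.toLin' A) => β u) := by
  classical
  set f := A.det with hfdef
  set I := Ideal.span {f} with hIdef
  set π : R →+* R ⧸ I := Ideal.Quotient.mk I with hπdef
  have hBsymm : (A.adjugate)ᵀ = A.adjugate := by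
    rw [adjugate_transpose, hA.eq]
  have hAv : ∀ v : Fin n → R, A.adjugate *ᵥ (A *ᵥ v) = f • v := by
    intro v; rw [mulVec_mulVec, adjugate_mul, smul_mulVec, one_mulVec]
  have hvA : ∀ v : Fin n → R, A *ᵥ (A.adjugate *ᵥ v) = f • v := by
    intro v; rw [mulVec_mulVec, mul_adjugate, smul_mulVec, one_mulVec]
  have hdot : ∀ x y : Fin n → R,
      x ⬝ᵥ (A.adjugate *ᵥ y) = (A.adjugate *ᵥ x) ⬝ᵥ y := by
    intro x y
    rw [dotProduct_mulVec, ← mulVec_transpose, hBsymm]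
  have hπsmul : ∀ (r s : R), π (r * s) = r • π s := fun r s => rfl
  have hmemf : ∀ r : R, f * r ∈ I := fun r =>
    Ideal.mem_span_singleton.2 (dvd_mul_right f r)
  -- the bilinear form on the free module
  set B₀ : (Fin n → R) →ₗ[R] (Fin n → R) →ₗ[R] (R ⧸ I) :=
    LinearMap.mk₂ R (fun x y => π (x ⬝ᵥ (A.adjugate *ᵥ y)))
      (fun x x' y => by rw [add_dotProduct, map_add])
      (fun r x y => by rw [smul_dotProduct, smul_eq_mul, hπsmul])
      (fun x y y' => by rw [mulVec_add, dotProduct_add, map_add])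
      (fun r x y => by rw [mulVec_smul, dotProduct_smul, smul_eq_mul, hπsmul])
      with hB₀def
  have hB₀ : ∀ x y : Fin n → R, B₀ x y = π (x ⬝ᵥ (A.adjugate *ᵥ y)) := fun x y => rfl
  have hleft : ∀ (z y : Fin n → R), B₀ (A *ᵥ z) y = 0 := by
    intro z y
    rw [hB₀, hdot, hAv, smul_dotProduct, smul_eq_mul]
    exact Ideal.Quotient.eq_zero_iff_mem.2 (hmemf _)
  have hright : ∀ (x z : Fin n → R), B₀ x (A *ᵥ z) = 0 := by
    intro x z
    rw [hB₀, hAv, dotProduct_smul, smul_eq_mul]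
    exact Ideal.Quotient.eq_zero_iff_mem.2 (hmemf _)
  set p := LinearMap.range (Matrix.toLin' A) with hpdef
  have hmem : ∀ v, v ∈ p ↔ ∃ z, A *ᵥ z = v := by
    intro v
    simp [hpdef, LinearMap.mem_range, Matrix.toLin'_apply]
  -- descend in the second variable (via flip on the first)
  have h1 : p ≤ LinearMap.ker B₀.flip := by
    intro v hv
    obtain ⟨z, rfl⟩ := (hmem v).1 hv
    rw [LinearMap.mem_ker]
    refine LinearMap.ext fun x => ?_
    simpa using hright x z
  set L1 : ((Fin n → R) ⧸ p) →ₗ[R] (Fin n → R) →ₗ[R] (R ⧸ I) :=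
    Submodule.liftQ p B₀.flip h1 with hL1def
  have h2 : p ≤ LinearMap.ker L1.flip := by
    intro v hv
    obtain ⟨z, rfl⟩ := (hmem v).1 hv
    rw [LinearMap.mem_ker]
    refine LinearMap.ext fun u => ?_
    obtain ⟨x, rfl⟩ := Submodule.Quotient.mk_surjective p u
    show L1 (Submodule.Quotient.mk x) (A *ᵥ z) = 0
    rw [hL1def, Submodule.liftQ_apply]
    simpa using hleft z x
  set β : ((Fin n → R) ⧸ p) →ₗ[R] ((Fin n → R) ⧸ p) →ₗ[R] (R ⧸ I) :=
    Submodule.liftQ p L1.flip h2 with hβdef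
  have hβmk : ∀ x y : Fin n → R,
      β (Submodule.Quotient.mk x) (Submodule.Quotient.mk y)
        = π (x ⬝ᵥ (A.adjugate *ᵥ y)) := by
    intro x y
    rw [hβdef, Submodule.liftQ_apply]
    show L1 (Submodule.Quotient.mk y) x = _
    rw [hL1def, Submodule.liftQ_apply]
    rfl
  refine ⟨?_, β, hβmk, ?_, ?_, ?_⟩
  · -- (a)
    intro c
    obtain ⟨x, rfl⟩ := Submodule.Quotient.mk_surjective p c
    rw [← Submodule.Quotient.mk_smul, Submodule.Quotient.mk_eq_zero]
    exact (hmem _).2 ⟨A.adjugate *ᵥ x, hvA x⟩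
  · -- symmetry
    intro u v
    obtain ⟨x, rfl⟩ := Submodule.Quotient.mk_surjective p u
    obtain ⟨y, rfl⟩ := Submodule.Quotient.mk_surjective p v
    rw [hβmk, hβmk, hdot, dotProduct_comm]
  · -- injectivity
    rw [show (fun u : (Fin n → R) ⧸ p => β u) = ⇑β from rfl]
    refine (injective_iff_map_eq_zero β).2 ?_
    intro u hu
    obtain ⟨x, rfl⟩ := Submodule.Quotient.mk_surjective p u
    have hz : ∀ j, ∃ r, (A.adjugate *ᵥ x) j = f * r := by
      intro j
      have h0 : β (Submodule.Quotient.mk x) (Submodule.Quotient.mk (Pi.single j 1)) = 0 := by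
        rw [hu]; rfl
      rw [hβmk, hdot, dotProduct_single, mul_one] at h0
      exact Ideal.mem_span_singleton.1 (Ideal.Quotient.eq_zero_iff_mem.1 h0)
    choose z hz using hz
    have hAz : A.adjugate *ᵥ x = f • z := funext fun j => by
      rw [Pi.smul_apply, smul_eq_mul]; exact hz j
    have hfx : f • x = f • (A *ᵥ z) := by
      rw [← hvA x, hAz, mulVec_smul]
    have hx : x = A *ᵥ z := funext fun j => by
      have := congrFun hfx j
      simp only [Pi.smul_apply, smul_eq_mul] at this
      exact (mul_cancel_left_mem_nonZeroDivisors hf).1 this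
    rw [Submodule.Quotient.mk_eq_zero]
    exact (hmem _).2 ⟨z, hx.symm⟩
  · -- surjectivity
    intro ψ
    have hc : ∀ i, ∃ r, π r = ψ (Submodule.Quotient.mk (Pi.single i 1)) := fun i =>
      Ideal.Quotient.mk_surjective _
    choose c hc using hc
    have hψ : ∀ x : Fin n → R, ψ (Submodule.Quotient.mk x) = π (c ⬝ᵥ x) := by
      intro x
      have hx : x = ∑ i, (x i) • (Pi.single i 1 : Fin n → R) := by
        have h := Finset.univ_sum_single x
        calc x = ∑ i, Pi.single i (x i) := h.symm
          _ = ∑ i, (x i) • (Pi.single i 1 : Fin n → R) :=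
            Finset.sum_congr rfl fun i _ => by rw [← Pi.single_smul, smul_eq_mul, mul_one]
      calc ψ (Submodule.Quotient.mk x)
          = ψ (p.mkQ x) := rfl
        _ = ∑ i, x i • ψ (p.mkQ (Pi.single i 1)) := by
            conv_lhs => rw [hx]
            rw [map_sum, map_sum]
            exact Finset.sum_congr rfl fun i _ => by rw [_root_.map_smul, _root_.map_smul]
        _ = ∑ i, x i • π (c i) := by
            exact Finset.sum_congr rfl fun i _ => by rw [hc]; rfl
        _ = π (∑ i, x i * c i) := by
            rw [map_sum]
            exact Finset.sum_congr rfl fun i _ => (hπsmul _ _).symm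
        _ = π (c ⬝ᵥ x) := by rw [dotProduct_comm]; rfl
    have hd : ∀ j, ∃ r, (A *ᵥ c) j = f * r := by
      intro j
      have h0 : ψ (Submodule.Quotient.mk (A *ᵥ Pi.single j 1)) = 0 := by
        have : Submodule.Quotient.mk (p := p) (A *ᵥ Pi.single j 1) = 0 :=
          (Submodule.Quotient.mk_eq_zero p).2 ((hmem _).2 ⟨Pi.single j 1, rfl⟩)
        rw [this, map_zero]
      rw [hψ, dotProduct_mulVec, ← mulVec_transpose, hA.eq, dotProduct_single, mul_one] at h0
      exact Ideal.mem_span_singleton.1 (Ideal.Quotient.eq_zero_iff_mem.1 h0)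
    choose d hd using hd
    have hAc : A *ᵥ c = f • d := funext fun j => by
      rw [Pi.smul_apply, smul_eq_mul]; exact hd j
    have hcd : A.adjugate *ᵥ d = c := by
      have h1' : f • (A.adjugate *ᵥ d) = f • c := by
        rw [← mulVec_smul, ← hAc, hAv]
      funext j
      have := congrFun h1' j
      simp only [Pi.smul_apply, smul_eq_mul] at this
      exact (mul_cancel_left_mem_nonZeroDivisors hf).1 this
    refine ⟨Submodule.Quotient.mk d, ?_⟩
    refine LinearMap.ext fun u => ?_
    obtain ⟨x, rfl⟩ := Submodule.Quotient.mk_surjective p u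
    show β (Submodule.Quotient.mk d) (Submodule.Quotient.mk x) = ψ (Submodule.Quotient.mk x)
    rw [hβmk, hdot, hcd, hψ]
end

section
/- Let R be a commutative ring and let A be a symmetric n × n matrix over R whose determinant det(A) is a nonzerodivisor in R. Let C := coker(A : Rⁿ → Rⁿ). Then Hom_R(C, R) = 0, and there is an isomorphism of R-modules Ext¹_R(C, R) ≅ C. (Affine version of Lemma 4.1: a symmetric sheaf C admits a self-dual isomorphism C^∨ ≅ C(m)[-1], i.e. its only nonvanishing local Ext against the structure sheaf is Ext¹, which is isomorphic to C itself, and C has projective dimension 1.) -/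
/-!
Affine version of Lemma 4.1 of the paper: for the cokernel `C` of a symmetric matrix with
nonzerodivisor determinant one has `Hom(C, R) = 0` and `Ext¹(C, R) ≅ C`.
-/

open CategoryTheory

namespace Lem41

open Limits Matrix

universe u

variable {R : Type u} [CommRing R] {n : ℕ}

/-- dot product with `w` as a linear map. -/
noncomputable def dotL (w : Fin n → R) : (Fin n → R) →ₗ[R] R :=
  ∑ i, w i • LinearMap.proj i

lemma dotL_apply (w x : Fin n → R) : dotL w x = ∑ i, w i * x i := by
  simp [dotL]

/-- the vector of values of `ψ` on the standard basis. -/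
noncomputable def vecL : ((Fin n → R) →ₗ[R] R) →ₗ[R] (Fin n → R) where
  toFun ψ := fun i => ψ (fun j => if i = j then 1 else 0)
  map_add' _ _ := rfl
  map_smul' _ _ := rfl

lemma vecL_apply (ψ : (Fin n → R) →ₗ[R] R) (i : Fin n) :
    vecL ψ i = ψ (fun j => if i = j then 1 else 0) := rfl

lemma apply_eq_sum (ψ : (Fin n → R) →ₗ[R] R) (x : Fin n → R) :
    ψ x = ∑ i, x i * vecL ψ i := by
  rw [LinearMap.pi_apply_eq_sum_univ ψ x]
  simp [vecL_apply, smul_eq_mul]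

lemma vecL_dotL (w : Fin n → R) : vecL (dotL w) = w := by
  funext i
  simp [vecL_apply, dotL_apply, ite_mul, mul_ite, Finset.sum_ite_eq]

lemma vecL_inj : Function.Injective (vecL (R := R) (n := n)) := by
  intro ψ χ h
  refine LinearMap.ext fun x => ?_
  rw [apply_eq_sum, apply_eq_sum, h]

lemma toLin'_apply_basis (A : Matrix (Fin n) (Fin n) R) (i : Fin n) :
    Matrix.toLin' A (fun j => if i = j then 1 else 0) = fun k => A k i := by
  funext k
  simp [Matrix.toLin'_apply, Matrix.mulVec, dotProduct, mul_ite, mul_one, mul_zero]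

lemma vecL_comp_toLin' (A : Matrix (Fin n) (Fin n) R) (χ : (Fin n → R) →ₗ[R] R) :
    vecL (χ ∘ₗ Matrix.toLin' A) = Matrix.mulVec Aᵀ (vecL χ) := by
  funext i
  rw [vecL_apply]
  simp only [LinearMap.comp_apply, toLin'_apply_basis]
  rw [apply_eq_sum χ]
  simp [Matrix.mulVec, dotProduct, Matrix.transpose_apply]

lemma eq_zero_of_mulVec_eq_zero {A : Matrix (Fin n) (Fin n) R}
    (hf : A.det ∈ nonZeroDivisors R) {x : Fin n → R} (h : A.mulVec x = 0) : x = 0 := by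
  have h2 : A.det • x = 0 := by
    have := congrArg (fun y => Matrix.mulVec A.adjugate y) h
    simpa [Matrix.mulVec_mulVec, Matrix.adjugate_mul, Matrix.smul_mulVec,
      Matrix.one_mulVec] using this
  funext i
  have := congrFun h2 i
  simp only [Pi.smul_apply, smul_eq_mul, Pi.zero_apply] at this ⊢
  exact hf.2 _ (by rwa [mul_comm] at this)

lemma toLin'_inj {A : Matrix (Fin n) (Fin n) R}
    (hf : A.det ∈ nonZeroDivisors R) : Function.Injective (Matrix.toLin' A) := by
  rw [← LinearMap.ker_eq_bot]
  ext x
  simp only [LinearMap.mem_ker, Submodule.mem_bot, Matrix.toLin'_apply]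
  exact ⟨fun h => eq_zero_of_mulVec_eq_zero hf h, fun h => by simp [h]⟩

/-- The two-term complex `… → 0 → Rⁿ → Rⁿ`. -/
noncomputable def resC (A : Matrix (Fin n) (Fin n) R) : ChainComplex (ModuleCat.{u} R) ℕ :=
  ChainComplex.of
    (fun k => match k with
      | 0 => ModuleCat.of R (Fin n → R)
      | 1 => ModuleCat.of R (Fin n → R)
      | _ + 2 => ModuleCat.of R PUnit.{u+1})
    (fun k => match k with
      | 0 => ModuleCat.ofHom (Matrix.toLin' A)
      | _ + 1 => 0)
    (fun _ => zero_comp)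

lemma resC_d10 (A : Matrix (Fin n) (Fin n) R) :
    (resC A).d 1 0 = ModuleCat.ofHom (Matrix.toLin' A) :=
  rfl

instance resC_projective (A : Matrix (Fin n) (Fin n) R) (k : ℕ) :
    Projective ((resC A).X k) := by
  match k with
  | 0 => exact ModuleCat.projective_of_free (Pi.basisFun R (Fin n))
  | 1 => exact ModuleCat.projective_of_free (Pi.basisFun R (Fin n))
  | (k+2) =>
    haveI : Subsingleton ((resC A).X (k+2)) := inferInstanceAs (Subsingleton PUnit)
    exact Limits.IsZero.projective (ModuleCat.isZero_of_subsingleton _)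

/-- the augmentation map -/
noncomputable def resπ (A : Matrix (Fin n) (Fin n) R) :
    resC A ⟶ (ChainComplex.single₀ (ModuleCat.{u} R)).obj
      (ModuleCat.of R ((Fin n → R) ⧸ LinearMap.range (Matrix.toLin' A))) :=
  (ChainComplex.toSingle₀Equiv _ _).symm
    ⟨ModuleCat.ofHom (LinearMap.range (Matrix.toLin' A)).mkQ, by
      rw [resC_d10]
      ext x
      show (LinearMap.range (Matrix.toLin' A)).mkQ (Matrix.toLin' A x) = 0
      rw [Submodule.mkQ_apply, Submodule.Quotient.mk_eq_zero]
      exact ⟨x, rfl⟩⟩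

lemma resπ_f_zero (A : Matrix (Fin n) (Fin n) R) :
    (resπ A).f 0 = ModuleCat.ofHom (LinearMap.range (Matrix.toLin' A)).mkQ :=
  ChainComplex.toSingle₀Equiv_symm_apply_f_zero _ _

lemma resC_exactAt_succ {A : Matrix (Fin n) (Fin n) R}
    (hf : A.det ∈ nonZeroDivisors R) (k : ℕ) : (resC A).ExactAt (k + 1) := by
  rw [HomologicalComplex.exactAt_iff' _ (k+2) (k+1) k (by simp) (by simp)]
  rw [ShortComplex.moduleCat_exact_iff]
  intro x hx
  match k with
  | 0 =>
    refine ⟨0, ?_⟩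
    have hx0 : x = 0 := by
      apply toLin'_inj hf (a₂ := 0)
      rw [map_zero]
      have : ((resC A).d 1 0) x = 0 := hx
      rw [resC_d10] at this
      exact this
    rw [map_zero, hx0]
  | (k+1) =>
    refine ⟨0, ?_⟩
    rw [map_zero]
    exact Subsingleton.allEq (α := PUnit.{u+1}) 0 x

lemma quasiIso_resπ {A : Matrix (Fin n) (Fin n) R}
    (hf : A.det ∈ nonZeroDivisors R) : QuasiIso (resπ A) := by
  constructor
  intro i
  match i with
  | (k+1) =>
    rw [quasiIsoAt_iff_exactAt' _ _ (ChainComplex.exactAt_succ_single_obj _ _)]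
    exact resC_exactAt_succ hf k
  | 0 =>
    rw [ChainComplex.quasiIsoAt₀_iff, ShortComplex.quasiIso_iff_of_zeros']
    rotate_left
    · exact (resC A).shape 0 0 (by simp)
    · rfl
    · rfl
    constructor
    · rw [ShortComplex.moduleCat_exact_iff]
      intro x hx
      have hx' : (LinearMap.range (Matrix.toLin' A)).mkQ x = 0 := by
        have : ((resπ A).f 0) x = 0 := hx
        rw [resπ_f_zero] at this
        exact this
      obtain ⟨y, hy⟩ : x ∈ LinearMap.range (Matrix.toLin' A) :=
        (Submodule.Quotient.mk_eq_zero _).mp hx'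
      refine ⟨y, ?_⟩
      show ((resC A).d 1 0) y = x
      rw [resC_d10]
      exact hy
    · rw [ModuleCat.epi_iff_surjective]
      show Function.Surjective ((resπ A).f 0)
      rw [resπ_f_zero]
      exact Submodule.mkQ_surjective _

/-- the projective resolution of the cokernel -/
noncomputable def res (A : Matrix (Fin n) (Fin n) R) (hf : A.det ∈ nonZeroDivisors R) :
    ProjectiveResolution (ModuleCat.of R ((Fin n → R) ⧸ LinearMap.range (Matrix.toLin' A))) where
  complex := resC A
  π := resπ A
  quasiIso := quasiIso_resπ hf

section Ext

variable (A : Matrix (Fin n) (Fin n) R)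

/-- the Hom cochain complex -/
noncomputable abbrev Kc : CochainComplex (ModuleCat.{u} R) ℕ :=
  (resC A).linearYonedaObj R (ModuleCat.of R R)

/-- its short complex around degree 1 -/
noncomputable abbrev Sc : ShortComplex (ModuleCat.{u} R) := (Kc A).sc' 0 1 2

lemma subsingleton_X3 : Subsingleton ↑((Sc A).X₃) := by
  have h : ∀ u v : ((resC A).X 2 ⟶ ModuleCat.of R R), u = v := by
    intro u v
    ext a
    rw [show a = 0 from Subsingleton.allEq (α := PUnit.{u+1}) a 0, map_zero, map_zero]
  exact ⟨h⟩

lemma mem_ker_Sg (x : ↑((Sc A).X₂)) : x ∈ LinearMap.ker (Sc A).g.hom := by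
  haveI := subsingleton_X3 A
  exact LinearMap.mem_ker.mpr (Subsingleton.allEq _ _)

lemma Sf_apply (χ : ↑((Sc A).X₁)) :
    ((Sc A).f χ : ModuleCat.of R (Fin n → R) ⟶ ModuleCat.of R R).hom =
      (χ : ModuleCat.of R (Fin n → R) ⟶ ModuleCat.of R R).hom ∘ₗ (Matrix.toLin' A) := by
  show (((Kc A).d 0 1) χ : ModuleCat.of R (Fin n → R) ⟶ ModuleCat.of R R).hom = _
  rw [ChainComplex.linearYonedaObj_d]
  show ((resC A).d 1 0 ≫ χ).hom = _
  rw [resC_d10]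
  rfl

/-- the comparison map from the concrete homology to the cokernel -/
noncomputable def Φ :
    LinearMap.ker (Sc A).g.hom →ₗ[R] ((Fin n → R) ⧸ LinearMap.range (Matrix.toLin' A)) :=
  (((LinearMap.range (Matrix.toLin' A)).mkQ ∘ₗ vecL) ∘ₗ
    (ModuleCat.homLinearEquiv (S := R) (M := ModuleCat.of R (Fin n → R))
      (N := ModuleCat.of R R)).toLinearMap) ∘ₗ (LinearMap.ker (Sc A).g.hom).subtype

lemma Φ_surj : Function.Surjective (Φ A) := by
  intro c
  obtain ⟨x, rfl⟩ := Submodule.mkQ_surjective _ c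
  refine ⟨⟨ModuleCat.ofHom (dotL x), mem_ker_Sg A _⟩, ?_⟩
  show (LinearMap.range (Matrix.toLin' A)).mkQ (vecL (dotL x)) = _
  rw [vecL_dotL]

lemma range_eq_ker (hA : A.IsSymm) :
    LinearMap.range (Sc A).moduleCatToCycles = LinearMap.ker (Φ A) := by
  ext x
  simp only [LinearMap.mem_range, LinearMap.mem_ker]
  constructor
  · rintro ⟨χ, rfl⟩
    show (LinearMap.range (Matrix.toLin' A)).mkQ
      (vecL ((Sc A).f χ : ModuleCat.of R (Fin n → R) ⟶ ModuleCat.of R R).hom) = 0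
    have h1 := vecL_comp_toLin' A (χ : ModuleCat.of R (Fin n → R) ⟶ ModuleCat.of R R).hom
    refine (Submodule.Quotient.mk_eq_zero _).mpr
      ⟨vecL (χ : ModuleCat.of R (Fin n → R) ⟶ ModuleCat.of R R).hom, ?_⟩
    refine Eq.trans ?_ ((congrArg vecL (Sf_apply A χ)).trans h1).symm
    exact (by intro v; rw [Matrix.toLin'_apply, hA.eq] :
      ∀ v, Matrix.toLin' A v = Aᵀ *ᵥ v) _
  · intro hx
    have hx' : vecL (((LinearMap.ker (Sc A).g.hom).subtype) x :
          ModuleCat.of R (Fin n → R) ⟶ ModuleCat.of R R).hom ∈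
        LinearMap.range (Matrix.toLin' A) := by
      have h0 : (LinearMap.range (Matrix.toLin' A)).mkQ
          (vecL (((LinearMap.ker (Sc A).g.hom).subtype) x :
          ModuleCat.of R (Fin n → R) ⟶ ModuleCat.of R R).hom) = 0 := hx
      rwa [Submodule.mkQ_apply, Submodule.Quotient.mk_eq_zero] at h0
    obtain ⟨w, hw⟩ := hx'
    refine ⟨ModuleCat.ofHom (dotL w), ?_⟩
    apply Subtype.ext
    show (Sc A).f (ModuleCat.ofHom (dotL w)) = ((LinearMap.ker (Sc A).g.hom).subtype) x
    refine ModuleCat.hom_ext (M := ModuleCat.of R (Fin n → R)) (N := ModuleCat.of R R) ?_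
    apply vecL_inj
    have hS := Sf_apply A (ModuleCat.ofHom (dotL w))
    refine ((congrArg vecL hS).trans ?_).trans hw
    show vecL (dotL w ∘ₗ Matrix.toLin' A) = _
    rw [vecL_comp_toLin', vecL_dotL, hA.eq, ← Matrix.toLin'_apply]

end Ext

end Lem41

open Lem41 in
/-- Let `R` be a commutative ring and `A` a symmetric `n × n` matrix over `R`
whose determinant is a nonzerodivisor. Let `C := coker(A : Rⁿ → Rⁿ)`. Then `Hom_R(C, R) = 0`
and there is an isomorphism of `R`-modules `Ext¹_R(C, R) ≅ C`. -/
theorem hom_eq_zero_and_ext_one_iso_coker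
    {R : Type*} [CommRing R] (n : ℕ)
    (A : Matrix (Fin n) (Fin n) R) (hA : A.IsSymm)
    (hf : A.det ∈ nonZeroDivisors R) :
    (∀ φ : ((Fin n → R) ⧸ LinearMap.range (Matrix.toLin' A)) →ₗ[R] R, φ = 0) ∧
    Nonempty
      ((((Ext R (ModuleCat R) 1).obj
          (Opposite.op (ModuleCat.of R
            ((Fin n → R) ⧸ LinearMap.range (Matrix.toLin' A))))).obj
        (ModuleCat.of R R)) ≃ₗ[R]
        ((Fin n → R) ⧸ LinearMap.range (Matrix.toLin' A))) := by
  constructor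
  · intro φ
    set ψ : (Fin n → R) →ₗ[R] R :=
      φ ∘ₗ (LinearMap.range (Matrix.toLin' A)).mkQ with hψ
    have hψf : ψ ∘ₗ Matrix.toLin' A = 0 := by
      refine LinearMap.ext fun x => ?_
      have h0 : (LinearMap.range (Matrix.toLin' A)).mkQ (Matrix.toLin' A x) = 0 := by
        rw [Submodule.mkQ_apply, Submodule.Quotient.mk_eq_zero]
        exact ⟨x, rfl⟩
      show φ ((LinearMap.range (Matrix.toLin' A)).mkQ (Matrix.toLin' A x)) = 0
      rw [h0, map_zero]
    have hv : A.mulVec (vecL ψ) = 0 := by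
      have h1 := vecL_comp_toLin' A ψ
      rw [hψf, map_zero] at h1
      rw [← hA.eq]
      exact h1.symm
    have hvz : vecL ψ = 0 := eq_zero_of_mulVec_eq_zero hf hv
    refine LinearMap.ext fun c => ?_
    obtain ⟨x, rfl⟩ := Submodule.mkQ_surjective _ c
    show ψ x = 0
    rw [apply_eq_sum, hvz]
    simp
  · refine ⟨?_⟩
    have e2 : ↑((Sc A).moduleCatLeftHomologyData.H) ≃ₗ[R]
        ((Fin n → R) ⧸ LinearMap.range (Matrix.toLin' A)) :=
      (Submodule.quotEquivOfEq _ _ (range_eq_ker A hA)).trans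
        ((Φ A).quotKerEquivOfSurjective (Φ_surj A))
    have e1 := (((res A hf).isoExt 1 (ModuleCat.of R R)) ≪≫
      (Kc A).homologyIsoSc' 0 1 2 (by simp) (by simp) ≪≫
      (Sc A).moduleCatHomologyIso).toLinearEquiv
    exact e1.trans e2
end
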